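/- Let N ∈ ℕ, n ∈ {1,…,N}, and Z = (z_{j,k}) ∈ ℂ^{N×n}. With the notation z̃_k, a_{j,k}, U_j(x) and G_m(Z) as defined, the exact identity ((N−n)!/N!)·per(Z) = ∑_{m=0}^n G_m(Z) holds. -/

import Mathlib

open scoped BigOperators

/-- The permanent of a rectangular complex matrix `Z ∈ ℂ^{N×n}` (`n ≤ N`):
`per(Z) = ∑_{j ∈ [N]^n_≠} ∏_{k=1}^n z_{j_k,k}`, i.e. the sum over injective
maps `Fin n → Fin N`. -/
noncomputable def rectPermanent {N n : ℕ} (Z : Matrix (Fin N) (Fin n) ℂ) : ℂ :=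
  ∑ j ∈ Finset.univ.filter (fun j : Fin n → Fin N => Function.Injective j),
    ∏ k : Fin n, Z (j k) k

/-- `z̃_k = (1/N) ∑_{j=1}^N z_{j,k}`, the `k`-th column mean. -/
noncomputable def ztilde {N n : ℕ} (Z : Matrix (Fin N) (Fin n) ℂ) (k : Fin n) : ℂ :=
  (N : ℂ)⁻¹ * ∑ j : Fin N, Z j k

/-- `a_{j,k} = z_{j,k} − z̃_k`. -/
noncomputable def aEnt {N n : ℕ} (Z : Matrix (Fin N) (Fin n) ℂ) (j : Fin N) (k : Fin n) : ℂ :=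
  Z j k - ztilde Z k

/-- `G_m(Z) = ((N−m)!/((n−m)!·N!)) · [x_1⋯x_n]((∏_j (1+U_j(x)))·(∑_k z̃_k x_k)^{n−m})`,
where `U_j(x) = ∑_k a_{j,k} x_k` and `[x_1⋯x_n]` denotes the coefficient of the
monomial `x_1⋯x_n` (the `MvPolynomial` coefficient at exponent `∑ k, Finsupp.single k 1`). -/
noncomputable def GZ {N n : ℕ} (Z : Matrix (Fin N) (Fin n) ℂ) (m : ℕ) : ℂ :=
  ((N - m).factorial : ℂ) / (((n - m).factorial : ℂ) * (N.factorial : ℂ)) *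
    MvPolynomial.coeff (∑ k : Fin n, Finsupp.single k 1)
      ((∏ j : Fin N,
          (1 + ∑ k : Fin n, MvPolynomial.C (aEnt Z j k) * MvPolynomial.X k)) *
        (∑ k : Fin n, MvPolynomial.C (ztilde Z k) * MvPolynomial.X k) ^ (n - m))

/-- `H_ℓ(Z) = ∑_{m=0}^ℓ G_m(Z)`. -/
noncomputable def HZ {N n : ℕ} (Z : Matrix (Fin N) (Fin n) ℂ) (ℓ : ℕ) : ℂ :=
  ∑ m ∈ Finset.range (ℓ + 1), GZ Z m

/-- `C_ℓ = (e^ℓ · ℓ! / ℓ^{ℓ+1/2})^{1/2}`. -/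
noncomputable def Cconst (ℓ : ℕ) : ℝ :=
  Real.sqrt (Real.exp ℓ * ℓ.factorial / (ℓ : ℝ) ^ ((ℓ : ℝ) + 1 / 2))

/-- `α = (1/(nN)) ∑_{j=1}^N ∑_{k=1}^n |a_{j,k}|²`. -/
noncomputable def alphaZ {N n : ℕ} (Z : Matrix (Fin N) (Fin n) ℂ) : ℝ :=
  ((n : ℝ) * N)⁻¹ * ∑ j : Fin N, ∑ k : Fin n, ‖aEnt Z j k‖ ^ 2

/-- `β = (1/n) ∑_{k=1}^n |z̃_k|²`. -/
noncomputable def betaZ {N n : ℕ} (Z : Matrix (Fin N) (Fin n) ℂ) : ℝ :=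
  (n : ℝ)⁻¹ * ∑ k : Fin n, ‖ztilde Z k‖ ^ 2

/-- `γ(d) = (nα/N)·min{dn, 1/(1−β)}`; for `β = 1` the quantity `1/(1−β)` is `+∞`,
so the minimum is interpreted as `dn`. `γ = γ(1)`. -/
noncomputable def gammaZ {N n : ℕ} (Z : Matrix (Fin N) (Fin n) ℂ) (d : ℝ) : ℝ :=
  (n : ℝ) * alphaZ Z / N *
    (if betaZ Z < 1 then min (d * n) (1 / (1 - betaZ Z)) else d * n)

section Aux

open MvPolynomial Finset

/-- The squarefree exponent `x_1⋯x_n`. -/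
noncomputable def dmon (n : ℕ) : Fin n →₀ ℕ := ∑ k : Fin n, Finsupp.single k 1

lemma dmon_apply {n : ℕ} (k : Fin n) : dmon n k = 1 := by
  simp [dmon, Finsupp.finset_sum_apply, Finsupp.single_apply]

lemma dmon_degree {n : ℕ} : (dmon n).degree = n := by
  have hs : (dmon n).support = Finset.univ := by
    ext k; simp [Finsupp.mem_support_iff, dmon_apply]
  rw [Finsupp.degree_eq_sum]
  simp [dmon_apply]

lemma lin_homog {n : ℕ} (c : Fin n → ℂ) :
    (∑ k : Fin n, (C (c k) * X k : MvPolynomial (Fin n) ℂ)).IsHomogeneous 1 :=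
  MvPolynomial.IsHomogeneous.sum _ _ _ (fun k _ => isHomogeneous_C_mul_X _ k)

lemma coeff_pow_prod {N n : ℕ} (S : MvPolynomial (Fin n) ℂ) (hS : S.IsHomogeneous 1)
    (U : Fin N → MvPolynomial (Fin n) ℂ) (hU : ∀ j, (U j).IsHomogeneous 1)
    (t : ℕ) (J : Finset (Fin N)) :
    coeff (dmon n) (S ^ t * ∏ j ∈ J, (1 + U j)) =
      ∑ W ∈ J.powerset.filter (fun W => t + W.card = n),
        coeff (dmon n) (S ^ t * ∏ j ∈ W, U j) := by
  classical
  have hexp : ∏ j ∈ J, (1 + U j) = ∑ W ∈ J.powerset, ∏ j ∈ W, U j := by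
    calc ∏ j ∈ J, (1 + U j) = ∏ j ∈ J, (U j + 1) := by simp [add_comm]
    _ = ∑ W ∈ J.powerset, (∏ j ∈ W, U j) * ∏ j ∈ J \ W, (1 : MvPolynomial (Fin n) ℂ) :=
        Finset.prod_add _ _ _
    _ = ∑ W ∈ J.powerset, ∏ j ∈ W, U j := by simp
  rw [hexp, Finset.mul_sum, coeff_sum]
  refine (Finset.sum_filter_of_ne ?_).symm
  intro W hW hne
  by_contra hcard
  apply hne
  have hhom : (S ^ t * ∏ j ∈ W, U j).IsHomogeneous (t + W.card) := by
    have h1 : (S ^ t).IsHomogeneous t := by simpa using hS.pow t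
    have h2 : (∏ j ∈ W, U j).IsHomogeneous W.card := by
      simpa using MvPolynomial.IsHomogeneous.prod W U (fun _ => 1) (fun j _ => hU j)
    exact h1.mul h2
  exact hhom.coeff_eq_zero (by rw [dmon_degree]; exact fun h => hcard h.symm)

/-- The exponent of the monomial picked by `g`. -/
noncomputable def Eexp {N n : ℕ} (g : Fin N → Option (Fin n)) : Fin n →₀ ℕ :=
  ∑ j : Fin N, (g j).elim 0 (fun k => Finsupp.single k 1)

lemma Eexp_apply {N n : ℕ} (g : Fin N → Option (Fin n)) (k : Fin n) :
    Eexp g k = (Finset.univ.filter (fun j => g j = some k)).card := by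
  classical
  rw [Eexp, Finsupp.finset_sum_apply, Finset.card_filter]
  refine Finset.sum_congr rfl (fun j _ => ?_)
  cases hj : g j with
  | none => simp [hj]
  | some k' => simp [hj, Finsupp.single_apply, eq_comm]

lemma Eexp_eq_iff {N n : ℕ} (g : Fin N → Option (Fin n)) :
    Eexp g = dmon n ↔ ∀ k, ∃! j, g j = some k := by
  classical
  constructor
  · intro h k
    have hk : (Finset.univ.filter (fun j => g j = some k)).card = 1 := by
      rw [← Eexp_apply, h, dmon_apply]
    obtain ⟨a, ha⟩ := Finset.card_eq_one.mp hk
    refine ⟨a, ?_, ?_⟩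
    · have : a ∈ Finset.univ.filter (fun j => g j = some k) := ha ▸ Finset.mem_singleton_self a
      exact (Finset.mem_filter.mp this).2
    · intro j hj
      have : j ∈ Finset.univ.filter (fun j => g j = some k) :=
        Finset.mem_filter.mpr ⟨Finset.mem_univ _, hj⟩
      rw [ha] at this
      exact Finset.mem_singleton.mp this
  · intro h
    ext k
    rw [Eexp_apply, dmon_apply]
    obtain ⟨a, ha, huniq⟩ := h k
    rw [Finset.card_eq_one]
    refine ⟨a, ?_⟩
    ext j
    simp only [Finset.mem_filter, Finset.mem_univ, true_and, Finset.mem_singleton]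
    exact ⟨fun hj => huniq j hj, fun hj => hj ▸ ha⟩

/-- The injection associated to a "system of distinct representatives" `g`. -/
noncomputable def fOf {N n : ℕ} (hN : 0 < N) (g : Fin N → Option (Fin n)) (k : Fin n) : Fin N :=
  if h : ∃ j, g j = some k then h.choose else ⟨0, hN⟩

lemma fOf_spec {N n : ℕ} (hN : 0 < N) {g : Fin N → Option (Fin n)} {k : Fin n}
    (h : ∃ j, g j = some k) : g (fOf hN g k) = some k := by
  rw [fOf, dif_pos h]; exact h.choose_spec

lemma fOf_eq {N n : ℕ} (hN : 0 < N) {g : Fin N → Option (Fin n)} {k : Fin n} {j : Fin N}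
    (hgood : ∃! j, g j = some k) (hj : g j = some k) : fOf hN g k = j := by
  obtain ⟨a, _, huniq⟩ := hgood
  rw [huniq _ (fOf_spec hN ⟨j, hj⟩), huniq _ hj]

lemma fOf_inj {N n : ℕ} (hN : 0 < N) {g : Fin N → Option (Fin n)}
    (hgood : ∀ k, ∃! j, g j = some k) : Function.Injective (fOf hN g) := by
  intro k k' h
  have h1 : g (fOf hN g k) = some k := fOf_spec hN (hgood k).exists
  have h2 : g (fOf hN g k') = some k' := fOf_spec hN (hgood k').exists
  rw [h, h2] at h1
  exact (Option.some_injective _ h1).symm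

lemma prod_monomial' {n : ℕ} {ι : Type*} (s : Finset ι) (e : ι → (Fin n →₀ ℕ)) (a : ι → ℂ) :
    ∏ j ∈ s, (monomial (e j) (a j) : MvPolynomial (Fin n) ℂ) =
      monomial (∑ j ∈ s, e j) (∏ j ∈ s, a j) := by
  classical
  induction s using Finset.cons_induction with
  | empty => simp
  | cons j s hj ih => rw [Finset.prod_cons, Finset.sum_cons, Finset.prod_cons, ih, monomial_mul]

lemma prod_one_add_lin {N n : ℕ} (c : Fin N → Fin n → ℂ) :
    (∏ j : Fin N, (1 + ∑ k : Fin n, C (c j k) * X k : MvPolynomial (Fin n) ℂ)) =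
      ∑ g : Fin N → Option (Fin n),
        monomial (Eexp g) (∏ j, (g j).elim 1 (fun k => c j k)) := by
  classical
  have h1 : (∏ j : Fin N, (1 + ∑ k : Fin n, C (c j k) * X k : MvPolynomial (Fin n) ℂ)) =
      ∏ j : Fin N, ∑ o ∈ (univ : Finset (Option (Fin n))),
        Option.elim o (1 : MvPolynomial (Fin n) ℂ) (fun k => C (c j k) * X k) := by
    refine Finset.prod_congr rfl fun j _ => ?_
    rw [Fintype.sum_option]; simp
  rw [h1, Finset.prod_univ_sum, Fintype.piFinset_univ]
  refine Finset.sum_congr rfl fun g _ => ?_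
  have h2 : ∀ j : Fin N,
      (Option.elim (g j) (1 : MvPolynomial (Fin n) ℂ) (fun k => C (c j k) * X k)) =
        monomial ((g j).elim 0 (fun k => Finsupp.single k 1)) ((g j).elim 1 (fun k => c j k)) := by
    intro j; cases hj : g j with
    | none => simp
    | some k => simp [C_mul_X_eq_monomial]
  rw [Finset.prod_congr rfl (fun j _ => h2 j), prod_monomial', Eexp]

lemma per_eq_coeff {N n : ℕ} (hN : 0 < N) (c : Fin N → Fin n → ℂ) :
    coeff (dmon n) (∏ j : Fin N, (1 + ∑ k : Fin n, C (c j k) * X k)) =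
      ∑ f ∈ Finset.univ.filter (fun f : Fin n → Fin N => Function.Injective f),
        ∏ k : Fin n, c (f k) k := by
  classical
  rw [prod_one_add_lin, coeff_sum]
  simp_rw [coeff_monomial]
  rw [← Finset.sum_filter]
  refine Finset.sum_nbij' (fOf hN) Function.partialInv ?_ ?_ ?_ ?_ ?_
  · intro g hg
    have good := (Eexp_eq_iff g).mp (Finset.mem_filter.mp hg).2
    exact Finset.mem_filter.mpr ⟨Finset.mem_univ _, fOf_inj hN good⟩
  · intro f hf
    have hfinj : Function.Injective f := (Finset.mem_filter.mp hf).2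
    refine Finset.mem_filter.mpr ⟨Finset.mem_univ _, (Eexp_eq_iff _).mpr fun k => ?_⟩
    refine ⟨f k, Function.partialInv_left hfinj k, fun j hj => ?_⟩
    exact ((Function.partialInv_of_injective hfinj k j).mp hj).symm
  · intro g hg
    have good := (Eexp_eq_iff g).mp (Finset.mem_filter.mp hg).2
    have hinj := fOf_inj hN good
    funext j
    cases hgj : g j with
    | some k =>
      have hk : fOf hN g k = j := fOf_eq hN (good k) hgj
      rw [← hk, Function.partialInv_left hinj]
    | none =>
      rcases ho : Function.partialInv (fOf hN g) j with _ | k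
      · rfl
      · exfalso
        have hfk : fOf hN g k = j := (Function.partialInv_of_injective hinj k j).mp ho
        have hs := fOf_spec hN (good k).exists
        rw [hfk, hgj] at hs
        exact absurd hs (by simp)
  · intro f hf
    have hfinj : Function.Injective f := (Finset.mem_filter.mp hf).2
    funext k
    refine fOf_eq hN ⟨f k, Function.partialInv_left hfinj k, fun j hj =>
      ((Function.partialInv_of_injective hfinj k j).mp hj).symm⟩
      (Function.partialInv_left hfinj k)
  · intro g hg
    have good := (Eexp_eq_iff g).mp (Finset.mem_filter.mp hg).2
    have hinj := fOf_inj hN good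
    have himage : ∀ j : Fin N, j ∉ Finset.univ.image (fOf hN g) → g j = none := by
      intro j hj
      cases hgj : g j with
      | none => rfl
      | some k =>
        exact absurd (Finset.mem_image.mpr ⟨k, Finset.mem_univ k, fOf_eq hN (good k) hgj⟩) hj
    calc (∏ j : Fin N, (g j).elim 1 (fun k => c j k))
        = ∏ j ∈ Finset.univ.image (fOf hN g), (g j).elim 1 (fun k => c j k) := by
          refine (Finset.prod_subset (Finset.subset_univ _) fun j _ hj => ?_).symm
          rw [himage j hj]; rfl
      _ = ∏ k : Fin n, (g (fOf hN g k)).elim 1 (fun k' => c (fOf hN g k) k') :=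
          Finset.prod_image fun k _ k' _ h => fOf_inj hN good h
      _ = ∏ k : Fin n, c (fOf hN g k) k := by
          refine Finset.prod_congr rfl fun k _ => ?_
          rw [fOf_spec hN (good k).exists]; rfl

lemma swap_count {N n : ℕ} (hnN : n ≤ N) (c : ℕ → Finset (Fin N) → ℂ) :
    ∑ T ∈ (univ : Finset (Fin N)).powerset,
      ∑ W ∈ ((univ \ T).powerset.filter (fun W => T.card + W.card = n)), c T.card W
    = ∑ m ∈ Finset.range (n+1), ((N-m).choose (n-m) : ℂ) *
        ∑ W ∈ powersetCard m (univ : Finset (Fin N)), c (n-m) W := by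
  classical
  have h1 : ∀ T : Finset (Fin N),
      ((univ \ T).powerset.filter (fun W => T.card + W.card = n)) =
        (univ : Finset (Fin N)).powerset.filter
          (fun W => Disjoint T W ∧ T.card + W.card = n) := by
    intro T
    ext W
    simp only [Finset.mem_filter, Finset.mem_powerset, Finset.subset_sdiff]
    constructor
    · rintro ⟨⟨h1, h2⟩, h3⟩; exact ⟨h1, h2.symm, h3⟩
    · rintro ⟨h1, h2, h3⟩; exact ⟨⟨h1, h2.symm⟩, h3⟩
  calc ∑ T ∈ (univ : Finset (Fin N)).powerset,
      ∑ W ∈ ((univ \ T).powerset.filter (fun W => T.card + W.card = n)), c T.card W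
      = ∑ T ∈ (univ : Finset (Fin N)).powerset, ∑ W ∈ (univ : Finset (Fin N)).powerset,
          if Disjoint T W ∧ T.card + W.card = n then c T.card W else 0 := by
        refine Finset.sum_congr rfl fun T _ => ?_
        rw [h1, Finset.sum_filter]
    _ = ∑ W ∈ (univ : Finset (Fin N)).powerset, ∑ T ∈ (univ : Finset (Fin N)).powerset,
          if Disjoint T W ∧ T.card + W.card = n then c T.card W else 0 :=
        Finset.sum_comm
    _ = ∑ W ∈ (univ : Finset (Fin N)).powerset,
          (if W.card ≤ n then ((N - W.card).choose (n - W.card) : ℂ) * c (n - W.card) W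
           else 0) := by
        refine Finset.sum_congr rfl fun W _ => ?_
        rw [← Finset.sum_filter]
        have h2 : ((univ : Finset (Fin N)).powerset.filter
            (fun T => Disjoint T W ∧ T.card + W.card = n)) =
            if W.card ≤ n then powersetCard (n - W.card) (univ \ W) else ∅ := by
          split_ifs with hw
          · ext T
            simp only [Finset.mem_filter, Finset.mem_powerset, Finset.mem_powersetCard,
              Finset.subset_sdiff]
            constructor
            · rintro ⟨h1, h2, h3⟩; exact ⟨⟨h1, h2⟩, by omega⟩
            · rintro ⟨⟨h1, h2⟩, h3⟩; exact ⟨h1, h2, by omega⟩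
          · ext T
            simp only [Finset.mem_filter, Finset.mem_powerset, Finset.notMem_empty,
              iff_false, not_and]
            intro _ _; omega
        rw [h2]
        split_ifs with hw
        · have h3 : ∀ T ∈ powersetCard (n - W.card) (univ \ W), c T.card W = c (n - W.card) W := by
            intro T hT
            rw [(Finset.mem_powersetCard.mp hT).2]
          rw [Finset.sum_congr rfl h3, Finset.sum_const, Finset.card_powersetCard,
            Finset.card_sdiff_of_subset (Finset.subset_univ W), Finset.card_univ, Fintype.card_fin,
            nsmul_eq_mul]
        · simp
    _ = ∑ m ∈ Finset.range (N+1), ∑ W ∈ powersetCard m (univ : Finset (Fin N)),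
          (if W.card ≤ n then ((N - W.card).choose (n - W.card) : ℂ) * c (n - W.card) W
           else 0) := by
        rw [Finset.powerset_card_disjiUnion, Finset.sum_disjiUnion (h := ?_), Finset.card_univ,
          Fintype.card_fin]
        exact (Finset.pairwise_disjoint_powersetCard _).set_pairwise _
    _ = ∑ m ∈ Finset.range (N+1),
          (if m ≤ n then ((N - m).choose (n - m) : ℂ) *
            ∑ W ∈ powersetCard m (univ : Finset (Fin N)), c (n-m) W else 0) := by
        refine Finset.sum_congr rfl fun m _ => ?_
        have h4 : ∀ W ∈ powersetCard m (univ : Finset (Fin N)), W.card = m :=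
          fun W hW => (Finset.mem_powersetCard.mp hW).2
        calc ∑ W ∈ powersetCard m (univ : Finset (Fin N)),
              (if W.card ≤ n then ((N - W.card).choose (n - W.card) : ℂ) * c (n - W.card) W
               else 0)
            = ∑ W ∈ powersetCard m (univ : Finset (Fin N)),
              (if m ≤ n then ((N - m).choose (n - m) : ℂ) * c (n - m) W else 0) := by
              refine Finset.sum_congr rfl fun W hW => ?_
              rw [h4 W hW]
          _ = _ := by
              split_ifs with hm
              · rw [Finset.mul_sum]
              · exact Finset.sum_const_zero
    _ = ∑ m ∈ Finset.range (n+1), ((N-m).choose (n-m) : ℂ) *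
          ∑ W ∈ powersetCard m (univ : Finset (Fin N)), c (n-m) W := by
        rw [← Finset.sum_subset (Finset.range_subset_range.mpr (by omega : n+1 ≤ N+1))
          (fun m _ hm => by rw [if_neg]; simp only [Finset.mem_range] at hm; omega)]
        refine Finset.sum_congr rfl fun m hm => ?_
        rw [if_pos]
        simp only [Finset.mem_range] at hm; omega

lemma scalar_eq {N n m : ℕ} (hm : m ≤ n) (hnN : n ≤ N) :
    ((N-n).factorial : ℂ)/(N.factorial : ℂ) * ((N-m).choose (n-m) : ℂ)
      = ((N-m).factorial : ℂ)/(((n-m).factorial : ℂ) * (N.factorial : ℂ)) := by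
  have key : (N-m).choose (n-m) * (n-m).factorial * (N-n).factorial = (N-m).factorial := by
    have h := Nat.choose_mul_factorial_mul_factorial (Nat.sub_le_sub_right hnN m)
    have h2 : (N-m) - (n-m) = N-n := by omega
    rwa [h2] at h
  have keyC : ((N-m).choose (n-m) : ℂ) * ((n-m).factorial : ℂ) * ((N-n).factorial : ℂ)
      = ((N-m).factorial : ℂ) := by exact_mod_cast congrArg (Nat.cast (R := ℂ)) key
  have h1 : (N.factorial : ℂ) ≠ 0 := Nat.cast_ne_zero.mpr (Nat.factorial_ne_zero _)
  have h2 : ((n-m).factorial : ℂ) ≠ 0 := Nat.cast_ne_zero.mpr (Nat.factorial_ne_zero _)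
  field_simp
  linear_combination keyC

/-- The linear form `S`. -/
noncomputable def Spoly {N n : ℕ} (Z : Matrix (Fin N) (Fin n) ℂ) : MvPolynomial (Fin n) ℂ :=
  ∑ k : Fin n, C (ztilde Z k) * X k

/-- The linear forms `U_j`. -/
noncomputable def Upoly {N n : ℕ} (Z : Matrix (Fin N) (Fin n) ℂ) (j : Fin N) :
    MvPolynomial (Fin n) ℂ :=
  ∑ k : Fin n, C (aEnt Z j k) * X k

/-- Coefficients `c2v t W = [x_1⋯x_n](S^t ∏_{j∈W} U_j)`. -/
noncomputable def c2v {N n : ℕ} (Z : Matrix (Fin N) (Fin n) ℂ) (t : ℕ) (W : Finset (Fin N)) : ℂ :=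
  coeff (dmon n) (Spoly Z ^ t * ∏ j ∈ W, Upoly Z j)

lemma GZ_eq {N n : ℕ} (Z : Matrix (Fin N) (Fin n) ℂ) {m : ℕ} (hm : m ≤ n) :
    GZ Z m = ((N-m).factorial : ℂ) / (((n-m).factorial : ℂ) * (N.factorial : ℂ)) *
      ∑ W ∈ powersetCard m (univ : Finset (Fin N)), c2v Z (n-m) W := by
  show ((N - m).factorial : ℂ) / (((n - m).factorial : ℂ) * (N.factorial : ℂ)) *
      coeff (dmon n) ((∏ j : Fin N, (1 + Upoly Z j)) * Spoly Z ^ (n - m)) = _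
  congr 1
  rw [mul_comm, coeff_pow_prod (Spoly Z) (lin_homog _) (Upoly Z) (fun j => lin_homog _)
    (n-m) univ]
  rw [powersetCard_eq_filter]
  refine Finset.sum_congr (Finset.filter_congr fun W hW => ?_) (fun _ _ => rfl)
  constructor <;> intro h <;> omega

end Aux

/-- Exact identity: `((N−n)!/N!)·per(Z) = ∑_{m=0}^n G_m(Z)` for `Z ∈ ℂ^{N×n}`, `n ≤ N`. -/
theorem stmt13 (N n : ℕ) (hn1 : 1 ≤ n) (hnN : n ≤ N)
    (Z : Matrix (Fin N) (Fin n) ℂ) :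
    ((N - n).factorial : ℂ) / (N.factorial : ℂ) * rectPermanent Z =
      ∑ m ∈ Finset.range (n + 1), GZ Z m := by
  classical
  open MvPolynomial Finset in
  have hN : 0 < N := lt_of_lt_of_le hn1 hnN
  have hLS : ∀ j : Fin N, (1 : MvPolynomial (Fin n) ℂ) + ∑ k : Fin n, C (Z j k) * X k
      = Spoly Z + (1 + Upoly Z j) := by
    intro j
    have hC : ∀ k : Fin n, (C (Z j k) : MvPolynomial (Fin n) ℂ)
        = C (aEnt Z j k) + C (ztilde Z k) := by
      intro k
      rw [← C_add]
      congr 1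
      rw [aEnt]; ring
    calc (1 : MvPolynomial (Fin n) ℂ) + ∑ k : Fin n, C (Z j k) * X k
        = 1 + ∑ k : Fin n, (C (aEnt Z j k) * X k + C (ztilde Z k) * X k) := by
          rw [Finset.sum_congr rfl fun k _ => by rw [hC k, add_mul]]
      _ = Spoly Z + (1 + Upoly Z j) := by
          rw [Finset.sum_add_distrib, Spoly, Upoly]; ring
  have hper : rectPermanent Z = ∑ m ∈ Finset.range (n+1), ((N-m).choose (n-m) : ℂ) *
      ∑ W ∈ powersetCard m (univ : Finset (Fin N)), c2v Z (n-m) W := by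
    have h0 : rectPermanent Z =
        coeff (dmon n) (∏ j : Fin N, (1 + ∑ k : Fin n, C (Z j k) * X k)) :=
      (per_eq_coeff hN (fun j k => Z j k)).symm
    rw [h0, Finset.prod_congr rfl (fun j _ => hLS j),
      Finset.prod_add (fun _ => Spoly Z) (fun j => 1 + Upoly Z j), coeff_sum]
    have h1 : ∀ T ∈ (univ : Finset (Fin N)).powerset,
        coeff (dmon n) ((∏ _i ∈ T, Spoly Z) * ∏ j ∈ univ \ T, (1 + Upoly Z j))
        = ∑ W ∈ ((univ \ T).powerset.filter (fun W => T.card + W.card = n)),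
            c2v Z T.card W := by
      intro T _
      rw [Finset.prod_const]
      exact coeff_pow_prod (Spoly Z) (lin_homog _) (Upoly Z) (fun j => lin_homog _)
        T.card (univ \ T)
    rw [Finset.sum_congr rfl h1, swap_count hnN]
  rw [hper, Finset.mul_sum]
  refine Finset.sum_congr rfl fun m hm => ?_
  have hm' : m ≤ n := by
    have := Finset.mem_range.mp hm; omega
  rw [GZ_eq Z hm', ← mul_assoc, scalar_eq hm' hnN]
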